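/- The DNLS soliton profile q₀(x,θ) = √(2 sin(2θ)) · cosh³(x − iθ)/|cosh(x − iθ)|⁴ · e^{−ix cot(2θ)} satisfies ‖q₀(·,θ)‖_{L²}² = 8θ for every θ ∈ (0, π/2). -/

import Mathlib

open Complex MeasureTheory

/-- The DNLS soliton profile
`q₀(x,θ) = √(2 sin 2θ) · cosh³(x−iθ)/|cosh(x−iθ)|⁴ · e^{−ix cot 2θ}`. -/
noncomputable def solitonProfile (θ x : ℝ) : ℂ :=
  (Real.sqrt (2 * Real.sin (2 * θ)) : ℂ) *
    (Complex.cosh ((x : ℂ) - I * (θ : ℂ))) ^ 3 / (‖Complex.cosh ((x : ℂ) - I * (θ : ℂ))‖ : ℂ) ^ 4 *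
    Complex.exp (-I * (x : ℂ) * ((Real.cos (2 * θ) / Real.sin (2 * θ) : ℝ) : ℂ))

lemma cosh_norm_sq_aux (θ x : ℝ) : ‖Complex.cosh ((x:ℂ) - I * θ)‖^2 =
    Real.cos θ^2 * Real.cosh x^2 + Real.sin θ^2 * Real.sinh x^2 := by
  have h : Complex.cosh ((x:ℂ) - I * θ) =
      ((Real.cosh x * Real.cos θ : ℝ) : ℂ) - ((Real.sinh x * Real.sin θ : ℝ):ℂ) * I := by
    rw [Complex.cosh_sub, show (I * (θ:ℂ)) = (θ:ℂ) * I by ring,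
      Complex.cosh_mul_I, Complex.sinh_mul_I]
    push_cast
    rw [← Complex.ofReal_cosh, ← Complex.ofReal_sinh, ← Complex.ofReal_cos, ← Complex.ofReal_sin]
    ring
  rw [h, Complex.sq_norm, Complex.normSq_apply]
  simp [Complex.cos_ofReal_re, Complex.sin_ofReal_re, Complex.sinh_ofReal_re]
  ring

lemma norm_profile_sq_aux (θ x : ℝ) (hs : 0 < Real.sin (2*θ)) (hc : 0 < Real.cos θ) :
    ‖solitonProfile θ x‖^2 =
      2 * Real.sin (2*θ) / (Real.cos θ^2 * Real.cosh x^2 + Real.sin θ^2 * Real.sinh x^2) := by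
  have hD : 0 < Real.cos θ^2 * Real.cosh x^2 + Real.sin θ^2 * Real.sinh x^2 := by
    have := Real.cosh_pos x
    positivity
  set N := ‖Complex.cosh ((x:ℂ) - I * θ)‖ with hN
  have hN2 : N^2 = Real.cos θ^2 * Real.cosh x^2 + Real.sin θ^2 * Real.sinh x^2 :=
    cosh_norm_sq_aux θ x
  have hNpos : 0 < N := by
    rcases (norm_nonneg (Complex.cosh ((x:ℂ) - I * θ))).lt_or_eq with h | h
    · exact h
    · exfalso; have hN0 : N = 0 := hN.trans h.symm; rw [hN0] at hN2; nlinarith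
  have hre : (-I * (x:ℂ) * ((Real.cos (2*θ)/Real.sin (2*θ) : ℝ):ℂ)).re = 0 := by
    set r : ℝ := Real.cos (2*θ)/Real.sin (2*θ) with hr
    simp [Complex.mul_re, Complex.mul_im]
  have hexp : ‖Complex.exp (-I * (x:ℂ) * ((Real.cos (2*θ)/Real.sin (2*θ) : ℝ):ℂ))‖ = 1 := by
    rw [Complex.norm_exp, hre, Real.exp_zero]
  have hnorm : ‖solitonProfile θ x‖ = Real.sqrt (2 * Real.sin (2*θ)) * N^3 / N^4 := by
    rw [solitonProfile, norm_mul, norm_div, norm_mul, hexp, mul_one, norm_pow, norm_pow,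
      Complex.norm_real, Complex.norm_real, Real.norm_eq_abs, Real.norm_eq_abs,
      _root_.abs_of_nonneg (Real.sqrt_nonneg _), _root_.abs_of_nonneg (norm_nonneg _)]
  rw [hnorm, div_pow, mul_pow, ← pow_mul, ← pow_mul, Real.sq_sqrt (by positivity), ← hN2]
  field_simp
  ring

lemma soliton_deriv_aux (θ : ℝ) (hθ : θ ∈ Set.Ioo 0 (Real.pi/2)) (x : ℝ) :
    HasDerivAt (fun y => 4 * Real.arctan (Real.tan θ * (Real.sinh y / Real.cosh y)))
      (2 * Real.sin (2*θ) / (Real.cos θ^2 * Real.cosh x^2 + Real.sin θ^2 * Real.sinh x^2)) x := by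
  have hc : 0 < Real.cos θ := Real.cos_pos_of_mem_Ioo ⟨by linarith [hθ.1, Real.pi_pos], hθ.2⟩
  have hch := Real.cosh_pos x
  have hu : HasDerivAt (fun y => Real.tan θ * (Real.sinh y / Real.cosh y))
      (Real.tan θ * ((Real.cosh x * Real.cosh x - Real.sinh x * Real.sinh x) / Real.cosh x^2)) x :=
    (((Real.hasDerivAt_sinh x).div (Real.hasDerivAt_cosh x) hch.ne')).const_mul _
  have h := (Real.hasDerivAt_arctan (Real.tan θ * (Real.sinh x / Real.cosh x))).comp x hu
  have h4 := h.const_mul (4:ℝ)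
  refine h4.congr_deriv ?_
  symm
  have hD : 0 < Real.cos θ^2 * Real.cosh x^2 + Real.sin θ^2 * Real.sinh x^2 := by positivity
  rw [Real.tan_eq_sin_div_cos, Real.sin_two_mul]
  have hid : Real.cosh x * Real.cosh x - Real.sinh x * Real.sinh x = 1 := by
    have := Real.cosh_sq_sub_sinh_sq x; nlinarith
  rw [hid]
  field_simp
  ring

lemma soliton_tendsto_aux (θ : ℝ) (hθ : θ ∈ Set.Ioo 0 (Real.pi/2)) :
    Filter.Tendsto (fun y => 4 * Real.arctan (Real.tan θ * (Real.sinh y / Real.cosh y)))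
      Filter.atTop (nhds (4*θ)) := by
  have htanh : Filter.Tendsto (fun y : ℝ => Real.sinh y / Real.cosh y) Filter.atTop (nhds 1) := by
    have heq : ∀ y : ℝ, Real.sinh y / Real.cosh y
        = (1 - Real.exp (-(2*y))) / (1 + Real.exp (-(2*y))) := by
      intro y
      rw [Real.sinh_eq, Real.cosh_eq, Real.exp_neg, Real.exp_neg,
        show (2*y) = y + y by ring, Real.exp_add]
      have h1 : Real.exp y ≠ 0 := Real.exp_ne_zero y
      field_simp
    simp_rw [heq]
    have hexp : Filter.Tendsto (fun y : ℝ => Real.exp (-(2*y))) Filter.atTop (nhds 0) :=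
      Real.tendsto_exp_neg_atTop_nhds_zero.comp
        (Filter.tendsto_id.const_mul_atTop (by norm_num))
    have h1 : Filter.Tendsto (fun y : ℝ => 1 - Real.exp (-(2*y))) Filter.atTop (nhds (1 - 0)) :=
      (tendsto_const_nhds (x := (1:ℝ))).sub hexp
    have h2 : Filter.Tendsto (fun y : ℝ => 1 + Real.exp (-(2*y))) Filter.atTop (nhds (1 + 0)) :=
      (tendsto_const_nhds (x := (1:ℝ))).add hexp
    have := h1.div h2 (by norm_num)
    simpa [Pi.div_def] using this
  have harctan : Filter.Tendsto
      (fun y : ℝ => 4 * Real.arctan (Real.tan θ * (Real.sinh y / Real.cosh y)))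
      Filter.atTop (nhds (4 * Real.arctan (Real.tan θ * 1))) :=
    (Real.continuous_arctan.tendsto _).comp (htanh.const_mul _) |>.const_mul 4
  rwa [mul_one, Real.arctan_tan (by linarith [hθ.1, Real.pi_pos]) hθ.2] at harctan

/-- The DNLS soliton profile satisfies `‖q₀(·,θ)‖_{L²}² = 8θ` for `θ ∈ (0, π/2)`. -/
theorem soliton_L2_norm (θ : ℝ) (hθ : θ ∈ Set.Ioo 0 (Real.pi / 2)) :
    (∫ x : ℝ, ‖solitonProfile θ x‖ ^ 2) = 8 * θ := by
  have hs2 : 0 < Real.sin (2*θ) :=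
    Real.sin_pos_of_pos_of_lt_pi (by linarith [hθ.1]) (by linarith [hθ.2])
  have hc : 0 < Real.cos θ := Real.cos_pos_of_mem_Ioo ⟨by linarith [hθ.1, Real.pi_pos], hθ.2⟩
  set f : ℝ → ℝ := fun x =>
    2 * Real.sin (2*θ) / (Real.cos θ^2 * Real.cosh x^2 + Real.sin θ^2 * Real.sinh x^2) with hf
  have hfpos : ∀ x, 0 ≤ f x := by
    intro x
    have := Real.cosh_pos x
    positivity
  have heven : ∀ x : ℝ, f x = f |x| := by
    intro x
    rcases abs_choice x with hx | hx
    · rw [hx]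
    · rw [hx, hf]; simp [Real.cosh_neg, Real.sinh_neg]
  have hIoi : (∫ x in Set.Ioi (0:ℝ), f x)
      = 4*θ - 4 * Real.arctan (Real.tan θ * (Real.sinh 0 / Real.cosh 0)) :=
    MeasureTheory.integral_Ioi_of_hasDerivAt_of_nonneg'
      (fun x _ => soliton_deriv_aux θ hθ x) (fun x _ => hfpos x) (soliton_tendsto_aux θ hθ)
  have hIoi' : (∫ x in Set.Ioi (0:ℝ), f x) = 4*θ := by
    rw [hIoi]; simp
  calc (∫ x : ℝ, ‖solitonProfile θ x‖ ^ 2) = ∫ x : ℝ, f x := by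
        congr 1
        exact funext fun x => norm_profile_sq_aux θ x hs2 hc
    _ = ∫ x : ℝ, f |x| := by simp_rw [← heven]
    _ = 2 * ∫ x in Set.Ioi (0:ℝ), f x := integral_comp_abs
    _ = 8 * θ := by rw [hIoi']; ring
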